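/- The Laplace transform of g₀(x) = x^{-3/2} e^{-1/x} (x > 0) is ℒ[g₀](u + iv) = √π · e^{-2(z₊ + i z₋)}, where 2z₊² = √(u²+v²) + u and 2z₋² = √(u²+v²) - u (with appropriate sign of z₋ matching the sign of v), valid for Re(u+iv) ≥ 0; in particular, for real s > 0, ∫₀^∞ e^{-sx} x^{-3/2} e^{-1/x} dx = √π e^{-2√s}. -/

import Mathlib

open MeasureTheory Complex Set Real

lemma aux_g_bound {x : ℝ} (hx : 0 < x) (hx1 : x ≤ 1) :
    x ^ (-(3:ℝ)/2) * Real.exp (-1/x) ≤ 4 := by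
  have hx2 : (0:ℝ) < 2*x := by linarith
  have h1 : (1/x)^2/4 ≤ Real.exp (1/x) := by
    have h2 : 1/(2*x) + 1 ≤ Real.exp (1/(2*x)) := Real.add_one_le_exp _
    have h3 : (1/(2*x))^2 ≤ (1/(2*x) + 1)^2 := by
      have : (0:ℝ) ≤ 1/(2*x) := by positivity
      nlinarith
    calc (1/x)^2/4 = (1/(2*x))^2 := by field_simp; ring
      _ ≤ (1/(2*x)+1)^2 := h3
      _ ≤ (Real.exp (1/(2*x)))^2 := by
          have : (0:ℝ) ≤ 1/(2*x) + 1 := by positivity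
          nlinarith [Real.exp_pos (1/(2*x))]
      _ = Real.exp (1/x) := by
          rw [← Real.exp_nat_mul]
          congr 1
          field_simp
          norm_num
  have h4 : Real.exp (-1/x) ≤ 4 * x^2 := by
    rw [neg_div, Real.exp_neg]
    have hpos : (0:ℝ) < (1/x)^2/4 := by positivity
    calc (Real.exp (1/x))⁻¹ ≤ ((1/x)^2/4)⁻¹ := by gcongr
      _ = 4 * x^2 := by field_simp
  have h5 : x ^ (-(3:ℝ)/2) * (4 * x^2) = 4 * x ^ ((1:ℝ)/2) := by
    rw [← Real.rpow_natCast x 2, ← mul_assoc, mul_comm (x ^ (-(3:ℝ)/2)) 4, mul_assoc,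
      ← Real.rpow_add hx]
    norm_num
  have h6 : x ^ ((1:ℝ)/2) ≤ 1 := by
    calc x ^ ((1:ℝ)/2) ≤ 1 ^ ((1:ℝ)/2) := Real.rpow_le_rpow hx.le hx1 (by norm_num)
      _ = 1 := Real.one_rpow _
  have h7 : (0:ℝ) < x ^ (-(3:ℝ)/2) := Real.rpow_pos_of_pos hx _
  nlinarith [Real.exp_pos (-1/x)]

lemma g_nonneg {x : ℝ} (hx : 0 ≤ x) : 0 ≤ x ^ (-(3:ℝ)/2) * Real.exp (-1/x) :=
  mul_nonneg (Real.rpow_nonneg hx _) (Real.exp_pos _).le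

lemma g_contOn : ContinuousOn (fun x : ℝ => x ^ (-(3:ℝ)/2) * Real.exp (-1/x)) (Ioi 0) := by
  apply ContinuousOn.mul
  · exact continuousOn_id.rpow_const (fun x hx => Or.inl (ne_of_gt hx))
  · exact Real.continuous_exp.comp_continuousOn
      (continuousOn_const.div continuousOn_id (fun x hx => ne_of_gt hx))

lemma g_integrable : IntegrableOn (fun x : ℝ => x ^ (-(3:ℝ)/2) * Real.exp (-1/x)) (Ioi 0) := by
  have key : Ioc (0:ℝ) 1 ∪ Ioi 1 = Ioi 0 := Ioc_union_Ioi_eq_Ioi zero_le_one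
  rw [← key]
  apply IntegrableOn.union
  · apply Integrable.mono' (g := fun _ : ℝ => (4:ℝ))
    · exact integrableOn_const (by simp [measure_Ioc_lt_top])
    · exact ((g_contOn.mono (Ioc_subset_Ioi_self)).aestronglyMeasurable measurableSet_Ioc)
    · filter_upwards [ae_restrict_mem measurableSet_Ioc] with x hx
      rw [Real.norm_of_nonneg (g_nonneg hx.1.le)]
      exact aux_g_bound hx.1 hx.2
  · apply Integrable.mono' (g := fun x : ℝ => x ^ (-(3:ℝ)/2))
    · exact integrableOn_Ioi_rpow_of_lt (by norm_num) one_pos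
    · exact ((g_contOn.mono (Ioi_subset_Ioi zero_le_one)).aestronglyMeasurable measurableSet_Ioi)
    · filter_upwards [ae_restrict_mem measurableSet_Ioi] with x hx
      have hx0 : (0:ℝ) < x := lt_trans one_pos hx
      rw [Real.norm_of_nonneg (g_nonneg hx0.le)]
      have h1 : Real.exp (-1/x) ≤ 1 :=
        Real.exp_le_one_iff.mpr (by rw [neg_div, neg_nonpos]; positivity)
      exact mul_le_of_le_one_right (Real.rpow_nonneg hx0.le _) h1

lemma gw_integrable {c : ℝ} (hc : 0 < c) :
    IntegrableOn (fun x : ℝ => x * Real.exp (-c*x) * (x ^ (-(3:ℝ)/2) * Real.exp (-1/x)))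
      (Ioi 0) := by
  have key : Ioc (0:ℝ) 1 ∪ Ioi 1 = Ioi 0 := Ioc_union_Ioi_eq_Ioi zero_le_one
  have hcont : ContinuousOn
      (fun x : ℝ => x * Real.exp (-c*x) * (x ^ (-(3:ℝ)/2) * Real.exp (-1/x))) (Ioi 0) :=
    (continuousOn_id.mul ((Real.continuous_exp.comp (continuous_const.mul continuous_id)).continuousOn)).mul g_contOn
  rw [← key]
  apply IntegrableOn.union
  · apply Integrable.mono' (g := fun _ : ℝ => (4:ℝ))
    · exact integrableOn_const (by simp [measure_Ioc_lt_top])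
    · exact ((hcont.mono (Ioc_subset_Ioi_self)).aestronglyMeasurable measurableSet_Ioc)
    · filter_upwards [ae_restrict_mem measurableSet_Ioc] with x hx
      have h1 : Real.exp (-c*x) ≤ 1 := Real.exp_le_one_iff.mpr (by nlinarith [hx.1])
      have h2 := aux_g_bound hx.1 hx.2
      have h3 := g_nonneg hx.1.le (x := x)
      rw [Real.norm_of_nonneg
        (mul_nonneg (mul_nonneg hx.1.le (Real.exp_pos _).le) h3)]
      have h4 : x * Real.exp (-c*x) ≤ 1 := mul_le_one₀ hx.2 (Real.exp_pos _).le h1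
      calc x * Real.exp (-c*x) * (x ^ (-(3:ℝ)/2) * Real.exp (-1/x))
          ≤ 1 * (x ^ (-(3:ℝ)/2) * Real.exp (-1/x)) := mul_le_mul_of_nonneg_right h4 h3
        _ ≤ 4 := by rw [one_mul]; exact h2
  · apply Integrable.mono' (g := fun x : ℝ => Real.exp (-c*x))
    · exact (exp_neg_integrableOn_Ioi 1 hc).congr_fun (fun x _ => by ring_nf) measurableSet_Ioi
    · exact ((hcont.mono (Ioi_subset_Ioi zero_le_one)).aestronglyMeasurable measurableSet_Ioi)
    · filter_upwards [ae_restrict_mem measurableSet_Ioi] with x hx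
      have hx0 : (0:ℝ) < x := lt_trans one_pos hx
      rw [Real.norm_of_nonneg (by positivity)]
      have h1 : Real.exp (-1/x) ≤ 1 :=
        Real.exp_le_one_iff.mpr (by rw [neg_div, neg_nonpos]; positivity)
      have h2 : x * x ^ (-(3:ℝ)/2) ≤ 1 := by
        have heq : x * x ^ (-(3:ℝ)/2) = x ^ (1 + -(3:ℝ)/2) := by
          rw [Real.rpow_add hx0, Real.rpow_one]
        rw [heq]
        exact Real.rpow_le_one_of_one_le_of_nonpos (le_of_lt hx) (by norm_num)
      calc x * Real.exp (-c*x) * (x ^ (-(3:ℝ)/2) * Real.exp (-1/x))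
          = (x * x ^ (-(3:ℝ)/2)) * Real.exp (-1/x) * Real.exp (-c*x) := by ring
        _ ≤ 1 * 1 * Real.exp (-c*x) := by
            apply mul_le_mul_of_nonneg_right _ (Real.exp_pos _).le
            have := Real.exp_pos (-1/x)
            nlinarith [mul_nonneg hx0.le (Real.rpow_nonneg hx0.le (-(3:ℝ)/2))]
        _ = Real.exp (-c*x) := by ring

lemma phi_image {b : ℝ} (hb : 0 < b) : (fun t : ℝ => t - b/t) '' Ioi 0 = univ := by
  apply eq_univ_of_forall
  intro u
  have hD : (0:ℝ) < u^2 + 4*b := by positivity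
  have hs : Real.sqrt (u^2 + 4*b)^2 = u^2 + 4*b := Real.sq_sqrt hD.le
  set D := Real.sqrt (u^2 + 4*b) with hDdef
  have habs : |u| < D := by
    rw [← Real.sqrt_sq_eq_abs]
    exact Real.sqrt_lt_sqrt (sq_nonneg u) (by linarith)
  have hneg : -u < D := lt_of_le_of_lt (neg_le_abs u) habs
  have ht : (0:ℝ) < (u + D)/2 := by linarith
  refine ⟨(u + D)/2, ht, ?_⟩
  have h1 : b/((u+D)/2) = (u+D)/2 - u := by
    rw [div_eq_iff (ne_of_gt ht)]
    linear_combination (-(1:ℝ)/4) * hs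
  simp only
  rw [h1]; ring

lemma phi_injOn {b : ℝ} (hb : 0 < b) : InjOn (fun t : ℝ => t - b/t) (Ioi 0) := by
  intro x hx y hy hxy
  simp only [mem_Ioi] at hx hy
  simp only at hxy
  by_contra hne
  rcases lt_or_gt_of_ne hne with h | h
  · have : b/y < b/x := div_lt_div_of_pos_left hb hx h
    linarith
  · have : b/x < b/y := div_lt_div_of_pos_left hb hy h
    linarith

lemma phi_deriv {b : ℝ} : ∀ t ∈ Ioi (0:ℝ),
    HasDerivWithinAt (fun t : ℝ => t - b/t) (1 + b/t^2) (Ioi 0) t := by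
  intro t ht
  have ht0 : t ≠ 0 := ne_of_gt ht
  have h1 : HasDerivAt (fun t : ℝ => b/t) (-b/t^2) t := by
    simpa [div_eq_mul_inv, neg_div, mul_comm] using ((hasDerivAt_inv ht0).const_mul b)
  have h : HasDerivAt (fun t : ℝ => t - b/t) (1 - -b/t^2) t := (hasDerivAt_id t).sub h1
  have : (1 : ℝ) - -b/t^2 = 1 + b/t^2 := by ring
  rw [this] at h
  exact h.hasDerivWithinAt

lemma inv_image {b : ℝ} (hb : 0 < b) : (fun t : ℝ => b/t) '' Ioi 0 = Ioi 0 := by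
  ext u
  constructor
  · rintro ⟨t, ht, rfl⟩
    exact div_pos hb ht
  · intro hu
    exact ⟨b/u, div_pos hb hu, by
      simp only
      rw [div_div_eq_mul_div, mul_comm, mul_div_assoc, div_self (ne_of_gt hb), mul_one]⟩

lemma inv_injOn {b : ℝ} (hb : 0 < b) : InjOn (fun t : ℝ => b/t) (Ioi 0) := by
  intro x hx y hy hxy
  simp only [mem_Ioi] at hx hy
  field_simp at hxy
  exact hxy.symm

lemma inv_deriv {b : ℝ} : ∀ t ∈ Ioi (0:ℝ),
    HasDerivWithinAt (fun t : ℝ => b/t) (-b/t^2) (Ioi 0) t := by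
  intro t ht
  have ht0 : t ≠ 0 := ne_of_gt ht
  exact (by simpa [div_eq_mul_inv, neg_div, mul_comm] using
    ((hasDerivAt_inv ht0).const_mul b) :
    HasDerivAt (fun t : ℝ => b/t) (-b/t^2) t).hasDerivWithinAt

lemma glasser_total {b : ℝ} (hb : 0 < b) :
    ∫ t in Ioi (0:ℝ), (1 + b/t^2) * Real.exp (-(t - b/t)^2) = Real.sqrt π := by
  have h := integral_image_eq_integral_abs_deriv_smul measurableSet_Ioi (phi_deriv (b := b))
    (phi_injOn hb) (fun u => Real.exp (-u^2))
  rw [phi_image hb] at h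
  have hg : (∫ u : ℝ, Real.exp (-u^2)) = Real.sqrt π := by
    simpa using integral_gaussian 1
  rw [setIntegral_univ] at h
  rw [← hg, h]
  apply setIntegral_congr_fun measurableSet_Ioi
  intro t ht
  have ht0 : (0:ℝ) < t := ht
  have : (0:ℝ) < 1 + b/t^2 := by positivity
  simp [abs_of_pos this, smul_eq_mul]

lemma glasser_swap {b : ℝ} (hb : 0 < b) :
    ∫ t in Ioi (0:ℝ), (b/t^2) * Real.exp (-(t - b/t)^2)
      = ∫ t in Ioi (0:ℝ), Real.exp (-(t - b/t)^2) := by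
  have h := integral_image_eq_integral_abs_deriv_smul measurableSet_Ioi (inv_deriv (b := b))
    (inv_injOn hb) (fun u => Real.exp (-(u - b/u)^2))
  rw [inv_image hb] at h
  rw [h]
  apply setIntegral_congr_fun measurableSet_Ioi
  intro t ht
  have ht0 : (0:ℝ) < t := ht
  have hbt : (0:ℝ) < b/t^2 := by positivity
  have key : b/(b/t) = t := by
    rw [div_div_eq_mul_div, mul_comm, mul_div_assoc, div_self (ne_of_gt hb), mul_one]
  simp only [smul_eq_mul, key]
  rw [neg_div, abs_neg, abs_of_pos hbt]
  congr 2
  ring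

lemma step1 (s : ℝ) :
    ∫ x in Ioi (0:ℝ), Real.exp (-s*x) * (x ^ (-(3:ℝ)/2) * Real.exp (-1/x))
      = 2 * ∫ t in Ioi (0:ℝ), Real.exp (-(t^2) - s/t^2) := by
  rw [← integral_comp_rpow_Ioi
    (fun x => Real.exp (-s*x) * (x ^ (-(3:ℝ)/2) * Real.exp (-1/x)))
    (p := -2) (by norm_num), ← MeasureTheory.integral_const_mul]
  apply setIntegral_congr_fun measurableSet_Ioi
  intro t ht
  have ht0 : (0:ℝ) < t := ht
  have h1 : (t:ℝ) ^ (-2:ℝ) = (t^2)⁻¹ := by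
    rw [show (-2:ℝ) = -(2:ℕ) by norm_num, Real.rpow_neg ht0.le, Real.rpow_natCast]
  have h2 : (t ^ (-2:ℝ)) ^ (-(3:ℝ)/2) = t ^ (3:ℝ) := by
    rw [← Real.rpow_mul ht0.le]; norm_num
  have h3 : t ^ (-2-1 : ℝ) * t ^ (3:ℝ) = 1 := by
    rw [← Real.rpow_add ht0]; norm_num
  simp only [smul_eq_mul, h2]
  rw [h1]
  have ht2 : (t:ℝ)^2 ≠ 0 := by positivity
  have e1 : -s * (t^2)⁻¹ = -(s/t^2) := by field_simp
  have e2 : -1 / ((t:ℝ)^2)⁻¹ = -(t^2) := by field_simp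
  rw [e1, e2]
  have e3 : Real.exp (-(t^2) - s/t^2) = Real.exp (-(s/t^2)) * Real.exp (-(t^2)) := by
    rw [← Real.exp_add]; ring_nf
  rw [e3]
  have h4 : t ^ (-2-1:ℝ) * t ^ (3:ℝ) = 1 := h3
  have : |(-2:ℝ)| = 2 := by norm_num
  rw [this]
  linear_combination (2 * Real.exp (-(s/t^2)) * Real.exp (-(t^2))) * h3






lemma E_contOn {b : ℝ} : ContinuousOn (fun t : ℝ => Real.exp (-(t - b/t)^2)) (Ioi 0) := by
  apply Real.continuous_exp.comp_continuousOn
  apply ContinuousOn.neg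
  exact ((continuousOn_id.sub (continuousOn_const.div continuousOn_id
    (fun x hx => ne_of_gt hx))).pow 2)

lemma glasser_full_int {b : ℝ} (hb : 0 < b) :
    IntegrableOn (fun t : ℝ => (1 + b/t^2) * Real.exp (-(t - b/t)^2)) (Ioi 0) := by
  have hG : Integrable (fun u : ℝ => Real.exp (-u^2)) := by
    simpa using integrable_exp_neg_mul_sq (one_pos)
  have h := (integrableOn_image_iff_integrableOn_abs_deriv_smul measurableSet_Ioi
    (phi_deriv (b := b)) (phi_injOn hb) (fun u => Real.exp (-u^2))).mp ?_
  · apply h.congr_fun ?_ measurableSet_Ioi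
    intro t ht
    have ht0 : (0:ℝ) < t := ht
    have hpos : (0:ℝ) < 1 + b/t^2 := by positivity
    simp [abs_of_pos hpos, smul_eq_mul]
  · rw [phi_image hb]
    exact hG.integrableOn

lemma glasser_E_int {b : ℝ} (hb : 0 < b) :
    IntegrableOn (fun t : ℝ => Real.exp (-(t - b/t)^2)) (Ioi 0) := by
  apply Integrable.mono' (glasser_full_int hb)
  · exact E_contOn.aestronglyMeasurable measurableSet_Ioi
  · filter_upwards [ae_restrict_mem measurableSet_Ioi] with t ht
    have ht0 : (0:ℝ) < t := ht
    rw [Real.norm_of_nonneg (Real.exp_pos _).le]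
    nlinarith [Real.exp_pos (-(t - b/t)^2), div_pos hb (by positivity : (0:ℝ) < t^2)]

lemma glasser_B_int {b : ℝ} (hb : 0 < b) :
    IntegrableOn (fun t : ℝ => (b/t^2) * Real.exp (-(t - b/t)^2)) (Ioi 0) := by
  have h := (glasser_full_int hb).sub (glasser_E_int hb)
  apply h.congr
  filter_upwards with t
  simp only [Pi.sub_apply]
  ring

lemma glasser_half {b : ℝ} (hb : 0 < b) :
    ∫ t in Ioi (0:ℝ), Real.exp (-(t - b/t)^2) = Real.sqrt π / 2 := by
  have h1 : ∫ t in Ioi (0:ℝ), (1 + b/t^2) * Real.exp (-(t - b/t)^2)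
      = (∫ t in Ioi (0:ℝ), Real.exp (-(t - b/t)^2))
        + ∫ t in Ioi (0:ℝ), (b/t^2) * Real.exp (-(t - b/t)^2) := by
    rw [← integral_add (glasser_E_int hb) (glasser_B_int hb)]
    apply setIntegral_congr_fun measurableSet_Ioi
    intro t _
    ring
  have h2 := glasser_total hb
  have h3 := glasser_swap hb
  linarith

lemma gauss_sub {s : ℝ} (hs : 0 < s) :
    ∫ t in Ioi (0:ℝ), Real.exp (-(t^2) - s/t^2)
      = Real.exp (-2 * Real.sqrt s) * (Real.sqrt π / 2) := by
  set b := Real.sqrt s with hbdef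
  have hb : 0 < b := Real.sqrt_pos.mpr hs
  have hb2 : b^2 = s := Real.sq_sqrt hs.le
  have key : ∀ t ∈ Ioi (0:ℝ),
      Real.exp (-(t^2) - s/t^2) = Real.exp (-2*b) * Real.exp (-(t - b/t)^2) := by
    intro t ht
    have ht0 : (0:ℝ) < t := ht
    rw [← Real.exp_add]
    congr 1
    have ht2 : (t:ℝ)^2 ≠ 0 := by positivity
    rw [← hb2]
    have hexp : (t - b/t)^2 = t^2 - 2*b + b^2/t^2 := by
      field_simp
      ring
    rw [hexp]
    ring
  rw [setIntegral_congr_fun measurableSet_Ioi key, MeasureTheory.integral_const_mul,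
    glasser_half hb]


lemma real_case {s : ℝ} (hs : 0 < s) :
    ∫ x in Ioi (0:ℝ), Real.exp (-s*x) * (x ^ (-(3:ℝ)/2) * Real.exp (-1/x))
      = Real.sqrt π * Real.exp (-2 * Real.sqrt s) := by
  rw [step1 s, gauss_sub hs]
  ring

lemma zero_case :
    ∫ x in Ioi (0:ℝ), (x ^ (-(3:ℝ)/2) * Real.exp (-1/x)) = Real.sqrt π := by
  have h := step1 0
  simp only [neg_zero, zero_mul, Real.exp_zero, one_mul, zero_div, sub_zero] at h
  rw [h]
  have hg : ∫ t in Ioi (0:ℝ), Real.exp (-(t^2)) = Real.sqrt π / 2 := by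
    have := integral_gaussian_Ioi 1
    simpa using this
  rw [hg]
  ring


noncomputable def Fc (z : ℂ) : ℂ :=
  ∫ x in Ioi (0:ℝ), Complex.exp (-z * (x:ℂ)) * ((x ^ (-(3:ℝ)/2) * Real.exp (-1/x) : ℝ) : ℂ)

noncomputable def Gc (z : ℂ) : ℂ :=
  (Real.sqrt π : ℂ) * Complex.exp (-2 * z ^ ((1:ℂ)/2))

lemma Fc_norm (z : ℂ) (x : ℝ) :
    ‖Complex.exp (-z * (x:ℂ)) * ((x ^ (-(3:ℝ)/2) * Real.exp (-1/x) : ℝ) : ℂ)‖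
      = Real.exp (-z.re * x) * |x ^ (-(3:ℝ)/2) * Real.exp (-1/x)| := by
  rw [norm_mul, Complex.norm_exp, Complex.norm_real]
  rw [Real.norm_eq_abs]
  congr 2
  simp [Complex.mul_re]

lemma Fc_meas (z : ℂ) :
    AEStronglyMeasurable
      (fun x : ℝ => Complex.exp (-z * (x:ℂ)) * ((x ^ (-(3:ℝ)/2) * Real.exp (-1/x) : ℝ) : ℂ))
      (volume.restrict (Ioi 0)) := by
  apply ContinuousOn.aestronglyMeasurable _ measurableSet_Ioi
  apply ContinuousOn.mul
  · exact (Complex.continuous_exp.comp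
      ((continuous_const.mul Complex.continuous_ofReal))).continuousOn
  · exact Complex.continuous_ofReal.comp_continuousOn g_contOn

lemma Fc_integrable {z : ℂ} (hz : 0 ≤ z.re) :
    IntegrableOn
      (fun x : ℝ => Complex.exp (-z * (x:ℂ)) * ((x ^ (-(3:ℝ)/2) * Real.exp (-1/x) : ℝ) : ℂ))
      (Ioi 0) := by
  apply Integrable.mono' g_integrable (Fc_meas z)
  filter_upwards [ae_restrict_mem measurableSet_Ioi] with x hx
  have hx0 : (0:ℝ) < x := hx
  rw [Fc_norm, _root_.abs_of_nonneg (g_nonneg hx0.le)]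
  have h1 : Real.exp (-z.re * x) ≤ 1 :=
    Real.exp_le_one_iff.mpr (by nlinarith)
  nlinarith [g_nonneg hx0.le (x := x), Real.exp_pos (-z.re * x)]


lemma Fc_differentiableOn : DifferentiableOn ℂ Fc {z : ℂ | 0 < z.re} := by
  intro z₀ hz₀
  have hre : (0:ℝ) < z₀.re := hz₀
  set ε : ℝ := z₀.re / 2 with hε
  have hεpos : 0 < ε := by positivity
  have key := hasDerivAt_integral_of_dominated_loc_of_deriv_le (μ := volume.restrict (Ioi 0))
    (F := fun (z : ℂ) (x : ℝ) =>
      Complex.exp (-z * (x:ℂ)) * ((x ^ (-(3:ℝ)/2) * Real.exp (-1/x) : ℝ) : ℂ))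
    (F' := fun (z : ℂ) (x : ℝ) =>
      Complex.exp (-z * (x:ℂ)) * (-(x:ℂ)) * ((x ^ (-(3:ℝ)/2) * Real.exp (-1/x) : ℝ) : ℂ))
    (x₀ := z₀) (bound := fun x : ℝ => x * Real.exp (-ε*x) * (x ^ (-(3:ℝ)/2) * Real.exp (-1/x)))
    (Metric.ball_mem_nhds z₀ hεpos) (Filter.Eventually.of_forall (fun z => Fc_meas z))
    (Fc_integrable (le_of_lt hre)) ?_ ?_ ?_ ?_
  · exact (key.2.differentiableAt).differentiableWithinAt
  · -- measurability of F' at z₀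
    apply ContinuousOn.aestronglyMeasurable _ measurableSet_Ioi
    apply ContinuousOn.mul
    · apply ContinuousOn.mul
      · exact (Complex.continuous_exp.comp
          ((continuous_const.mul Complex.continuous_ofReal))).continuousOn
      · exact (Complex.continuous_ofReal.neg).continuousOn
    · exact Complex.continuous_ofReal.comp_continuousOn g_contOn
  · -- bound
    filter_upwards [ae_restrict_mem measurableSet_Ioi] with x hx
    intro z hzball
    have hx0 : (0:ℝ) < x := hx
    have hzre : ε < z.re := by
      have h1 : |z.re - z₀.re| ≤ ‖z - z₀‖ := by
        rw [← Complex.sub_re]; exact Complex.abs_re_le_norm _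
      have h2 : ‖z - z₀‖ < ε := mem_ball_iff_norm.mp hzball
      have := abs_lt.mp (lt_of_le_of_lt h1 h2)
      simp only [hε] at *
      linarith
    rw [norm_mul, norm_mul]
    rw [Complex.norm_exp]
    have hre2 : (-z * (x:ℂ)).re = -z.re * x := by simp [Complex.mul_re]
    rw [hre2, Complex.norm_real, Real.norm_eq_abs,
      _root_.abs_of_nonneg (g_nonneg hx0.le)]
    have hnx : ‖-(x:ℂ)‖ = x := by
      rw [norm_neg, Complex.norm_real, Real.norm_eq_abs, _root_.abs_of_nonneg hx0.le]
    rw [hnx]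
    have h3 : Real.exp (-z.re * x) ≤ Real.exp (-ε * x) := by
      apply Real.exp_le_exp.mpr
      nlinarith
    have h4 := g_nonneg hx0.le (x := x)
    calc Real.exp (-z.re * x) * x * (x ^ (-(3:ℝ)/2) * Real.exp (-1/x))
        ≤ Real.exp (-ε * x) * x * (x ^ (-(3:ℝ)/2) * Real.exp (-1/x)) := by
          apply mul_le_mul_of_nonneg_right _ h4
          exact mul_le_mul_of_nonneg_right h3 hx0.le
      _ = x * Real.exp (-ε*x) * (x ^ (-(3:ℝ)/2) * Real.exp (-1/x)) := by ring
  · exact gw_integrable hεpos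
  · -- differentiability in z
    filter_upwards with x
    intro z hzball
    have h1 : HasDerivAt (fun z : ℂ => -z * (x:ℂ)) (-(x:ℂ)) z := by
      simpa using ((hasDerivAt_id z).neg.mul_const (x:ℂ))
    exact (h1.cexp.mul_const _)

lemma Gc_differentiableOn : DifferentiableOn ℂ Gc {z : ℂ | 0 < z.re} := by
  intro z hz
  have hslit : z ∈ Complex.slitPlane := Or.inl hz
  have h2 : DifferentiableAt ℂ (fun w : ℂ => w ^ ((1:ℂ)/2)) z :=
    ((hasDerivAt_id z).cpow_const hslit).differentiableAt
  exact (((h2.const_mul (-2)).cexp).const_mul _).differentiableWithinAt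

lemma Fc_eq_Gc_real {s : ℝ} (hs : 0 < s)
    (hreal : ∫ x in Ioi (0:ℝ), Real.exp (-s*x) * (x ^ (-(3:ℝ)/2) * Real.exp (-1/x))
        = Real.sqrt π * Real.exp (-2 * Real.sqrt s)) :
    Fc (s:ℂ) = Gc (s:ℂ) := by
  have hF : Fc (s:ℂ) = ((Real.sqrt π * Real.exp (-2 * Real.sqrt s) : ℝ) : ℂ) := by
    have cast_eq :
        (((∫ x in Ioi (0:ℝ), Real.exp (-s*x) * (x ^ (-(3:ℝ)/2) * Real.exp (-1/x))) : ℝ) : ℂ)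
          = ∫ x in Ioi (0:ℝ),
              ((Real.exp (-s*x) * (x ^ (-(3:ℝ)/2) * Real.exp (-1/x)) : ℝ) : ℂ) :=
      (integral_ofReal (𝕜 := ℂ)).symm
    rw [Fc, ← hreal, cast_eq]
    apply setIntegral_congr_fun measurableSet_Ioi
    intro x hx
    simp only [Complex.ofReal_mul, Complex.ofReal_exp, Complex.ofReal_neg]
  have hG : Gc (s:ℂ) = ((Real.sqrt π * Real.exp (-2 * Real.sqrt s) : ℝ) : ℂ) := by
    rw [Gc]
    have h1 : (s:ℂ) ^ ((1:ℂ)/2) = ((Real.sqrt s : ℝ) : ℂ) := by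
      rw [show ((1:ℂ)/2) = (((1/2 : ℝ)):ℂ) by norm_num,
        ← Complex.ofReal_cpow hs.le, Real.sqrt_eq_rpow]
    rw [h1, show ((-2:ℂ) * ((Real.sqrt s : ℝ):ℂ)) = (((-2 * Real.sqrt s : ℝ)):ℂ) by push_cast; ring,
      ← Complex.ofReal_exp, ← Complex.ofReal_mul]
  rw [hF, hG]

lemma Fc_eq_Gc_open
    (hAll : ∀ s : ℝ, 0 < s →
      ∫ x in Ioi (0:ℝ), Real.exp (-s*x) * (x ^ (-(3:ℝ)/2) * Real.exp (-1/x))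
        = Real.sqrt π * Real.exp (-2 * Real.sqrt s)) :
    EqOn Fc Gc {z : ℂ | 0 < z.re} := by
  have hU : IsOpen {z : ℂ | 0 < z.re} := isOpen_lt continuous_const Complex.continuous_re
  have hFa := Fc_differentiableOn.analyticOnNhd hU
  have hGa := Gc_differentiableOn.analyticOnNhd hU
  have hpre : IsPreconnected {z : ℂ | 0 < z.re} :=
    (convex_halfSpace_re_gt 0).isPreconnected
  have h1 : (1:ℂ) ∈ {z : ℂ | 0 < z.re} := by norm_num [mem_setOf_eq]
  apply hFa.eqOn_of_preconnected_of_frequently_eq hGa hpre h1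
  have hseq : Filter.Tendsto (fun n : ℕ => ((1 + 1/(n+1) : ℝ) : ℂ)) Filter.atTop
      (nhdsWithin (1:ℂ) {(1:ℂ)}ᶜ) := by
    apply tendsto_nhdsWithin_of_tendsto_nhds_of_eventually_within
    · have h2 : Filter.Tendsto (fun n : ℕ => (1 + 1/(n+1) : ℝ)) Filter.atTop (nhds 1) := by
        simpa using ((tendsto_one_div_add_atTop_nhds_zero_nat (𝕜 := ℝ)).const_add 1)
      have h3 := (Complex.continuous_ofReal.tendsto 1).comp h2
      simpa [Function.comp_def] using h3
    · filter_upwards with n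
      simp only [mem_compl_iff, mem_singleton_iff]
      intro h
      have h4 : (1 + 1/(n+1) : ℝ) = 1 := by exact_mod_cast h
      have hn : (0:ℝ) < 1/(n+1:ℝ) := by positivity
      linarith
  apply hseq.frequently
  apply Filter.Eventually.frequently
  filter_upwards with n
  have hp : (0:ℝ) < 1 + 1/(n+1) := by positivity
  exact Fc_eq_Gc_real hp (hAll _ hp)

lemma Fc_contWithin {z : ℂ} (hz : 0 ≤ z.re) :
    ContinuousWithinAt Fc {w : ℂ | 0 ≤ w.re} z := by
  have : ContinuousWithinAt
      (fun w : ℂ => ∫ x : ℝ,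
        Complex.exp (-w * (x:ℂ)) * ((x ^ (-(3:ℝ)/2) * Real.exp (-1/x) : ℝ) : ℂ)
        ∂(volume.restrict (Ioi 0)))
      {w : ℂ | 0 ≤ w.re} z := by
    apply MeasureTheory.continuousWithinAt_of_dominated
      (bound := fun x => x ^ (-(3:ℝ)/2) * Real.exp (-1/x))
    · exact Filter.Eventually.of_forall (fun w => Fc_meas w)
    · filter_upwards [eventually_mem_nhdsWithin] with w hw
      filter_upwards [ae_restrict_mem measurableSet_Ioi] with x hx
      have hx0 : (0:ℝ) < x := hx
      have hwre : (0:ℝ) ≤ w.re := hw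
      rw [Fc_norm, _root_.abs_of_nonneg (g_nonneg hx0.le)]
      have h1 : Real.exp (-w.re * x) ≤ 1 :=
        Real.exp_le_one_iff.mpr (by nlinarith)
      nlinarith [g_nonneg hx0.le (x := x), Real.exp_pos (-w.re * x)]
    · exact g_integrable
    · filter_upwards with x
      exact ((Complex.continuous_exp.comp
        ((continuous_id.neg.mul continuous_const))).mul continuous_const).continuousWithinAt
  exact this

lemma Gc_contAt {z : ℂ} (hz : z ∈ Complex.slitPlane) : ContinuousAt Gc z := by
  have h1 : ContinuousAt (fun w : ℂ => w ^ ((1:ℂ)/2)) z := continuousAt_cpow_const hz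
  have h2 : ContinuousAt (fun w : ℂ => -2 * w ^ ((1:ℂ)/2)) z := continuousAt_const.mul h1
  have h3 : ContinuousAt (fun w : ℂ => Complex.exp (-2 * w ^ ((1:ℂ)/2))) z :=
    Complex.continuous_exp.continuousAt.comp h2
  exact continuousAt_const.mul h3


lemma Fc_eq_Gc_zero : Fc 0 = Gc 0 := by
  have hF : Fc 0 = ((Real.sqrt π : ℝ) : ℂ) := by
    rw [Fc]
    have cast_eq :
        (((∫ x in Ioi (0:ℝ), (x ^ (-(3:ℝ)/2) * Real.exp (-1/x))) : ℝ) : ℂ)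
          = ∫ x in Ioi (0:ℝ), (((x ^ (-(3:ℝ)/2) * Real.exp (-1/x)) : ℝ) : ℂ) :=
      (integral_ofReal (𝕜 := ℂ)).symm
    rw [← zero_case, cast_eq]
    apply setIntegral_congr_fun measurableSet_Ioi
    intro x hx
    simp
  have hG : Gc 0 = ((Real.sqrt π : ℝ) : ℂ) := by
    rw [Gc, Complex.zero_cpow (by norm_num : ((1:ℂ)/2) ≠ 0)]
    simp
  rw [hF, hG]

lemma Fc_eq_Gc {z : ℂ} (hz : 0 ≤ z.re)
    (hAll : ∀ s : ℝ, 0 < s →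
      ∫ x in Ioi (0:ℝ), Real.exp (-s*x) * (x ^ (-(3:ℝ)/2) * Real.exp (-1/x))
        = Real.sqrt π * Real.exp (-2 * Real.sqrt s)) :
    Fc z = Gc z := by
  rcases lt_or_eq_of_le hz with hlt | heq
  · exact Fc_eq_Gc_open hAll hlt
  · by_cases hz0 : z = 0
    · rw [hz0]; exact Fc_eq_Gc_zero
    · have him : z.im ≠ 0 := by
        intro h
        exact hz0 (Complex.ext heq.symm h)
      set seq : ℕ → ℂ := fun n => z + ((1/(n+1) : ℝ) : ℂ) with hseq
      have hpos : ∀ n : ℕ, 0 < (seq n).re := by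
        intro n
        simp only [hseq, Complex.add_re, Complex.ofReal_re, ← heq]
        positivity
      have htend : Filter.Tendsto seq Filter.atTop (nhdsWithin z {w : ℂ | 0 ≤ w.re}) := by
        apply tendsto_nhdsWithin_of_tendsto_nhds_of_eventually_within
        · have h2 : Filter.Tendsto (fun n : ℕ => (1/(n+1) : ℝ)) Filter.atTop (nhds 0) :=
            tendsto_one_div_add_atTop_nhds_zero_nat
          have h3 := (Complex.continuous_ofReal.tendsto 0).comp h2
          have h4 := (tendsto_const_nhds (x := z) (f := Filter.atTop (α := ℕ))).add h3
          rw [hseq]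
          simpa [Function.comp_def] using h4
        · filter_upwards with n
          exact (hpos n).le
      have hFt : Filter.Tendsto (fun n => Fc (seq n)) Filter.atTop (nhds (Fc z)) :=
        (Fc_contWithin hz).tendsto.comp htend
      have hGt : Filter.Tendsto (fun n => Gc (seq n)) Filter.atTop (nhds (Gc z)) :=
        ((Gc_contAt (Or.inr him)).continuousWithinAt).tendsto.comp htend
      have heqn : (fun n => Fc (seq n)) = (fun n => Gc (seq n)) :=
        funext fun n => Fc_eq_Gc_open hAll (hpos n)
      rw [heqn] at hFt
      exact tendsto_nhds_unique hFt hGt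


/-- Laplace transform of `g₀(x) = x^{-3/2} e^{-1/x}`: for `Re z ≥ 0`,
`ℒ[g₀](z) = √π e^{-2√z}` (principal square root, i.e. `√z = z₊ + i z₋` with
`2z₊² = |z| + Re z`, `2z₋² = |z| - Re z`); in particular, for real `s > 0`,
`∫₀^∞ e^{-sx} x^{-3/2} e^{-1/x} dx = √π e^{-2√s}`. -/
theorem laplace_transform_g0
    (z : ℂ) (hz : 0 ≤ z.re) :
    (∫ x in Set.Ioi (0 : ℝ),
        Complex.exp (-z * (x : ℂ)) * ((x ^ (-(3 : ℝ) / 2) * Real.exp (-1 / x) : ℝ) : ℂ)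
      = (Real.sqrt π : ℂ) * Complex.exp (-2 * z ^ ((1 : ℂ) / 2)))
    ∧ ∀ s : ℝ, 0 < s →
      ∫ x in Set.Ioi (0 : ℝ), Real.exp (-s * x) * (x ^ (-(3 : ℝ) / 2) * Real.exp (-1 / x))
        = Real.sqrt π * Real.exp (-2 * Real.sqrt s) := by
  have hAll : ∀ s : ℝ, 0 < s →
      ∫ x in Ioi (0:ℝ), Real.exp (-s*x) * (x ^ (-(3:ℝ)/2) * Real.exp (-1/x))
        = Real.sqrt π * Real.exp (-2 * Real.sqrt s) := fun s hs => real_case hs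
  exact ⟨Fc_eq_Gc hz hAll, hAll⟩
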